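/- arXiv:math/0207308 — 4 statements merged into one kernel-verified Lean document; each statement's English description precedes it below -/
import Mathlib

section
/- Let G be a finite group and ρ₁, ρ₂ finite-dimensional complex representations of G with characters χ₁, χ₂. If χ₁(g)^k = χ₂(g)^k for all g ∈ G (for some positive integer k) and ρ₁ is irreducible, then ρ₂ is irreducible. -/
open CategoryTheory Module Polynomial FDRep

set_option linter.unusedSectionVars false

section Aux


lemma trace_inv_eq_conj {V : Type*} [AddCommGroup V] [Module ℂ V] [FiniteDimensional ℂ V]
    (A B : Module.End ℂ V) (n : ℕ) (hn : 0 < n) (hAn : A ^ n = 1) (hAB : A * B = 1) :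
    LinearMap.trace ℂ V B = starRingEnd ℂ (LinearMap.trace ℂ V A) := by
  classical
  have hB : B = A ^ (n - 1) := by
    have h1 : A ^ (n-1) * (A * B) = A ^ (n-1) := by rw [hAB, mul_one]
    rw [← mul_assoc, ← pow_succ, Nat.sub_add_cancel hn, hAn, one_mul] at h1
    exact h1
  have hBA : B * A = 1 := by
    rw [hB, ← pow_succ, Nat.sub_add_cancel hn, hAn]
  have hsq : Squarefree (X ^ n - C (1:ℂ)) :=
    (separable_X_pow_sub_C (1:ℂ) (Nat.cast_ne_zero.mpr hn.ne') one_ne_zero).squarefree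
  have h0 : aeval A (X ^ n - C (1:ℂ)) = 0 := by
    simp [hAn]
  have hss := Module.End.isSemisimple_of_squarefree_aeval_eq_zero hsq h0
  have hfs := hss.isFinitelySemisimple
  have hint : DirectSum.IsInternal A.eigenspace := by
    rw [DirectSum.isInternal_submodule_iff_iSupIndep_and_iSup_eq_top]
    refine ⟨A.eigenspaces_iSupIndep, ?_⟩
    have h := Module.End.iSup_maxGenEigenspace_eq_top A
    calc ⨆ μ, A.eigenspace μ = ⨆ μ, A.maxGenEigenspace μ := by
          simp [hfs.maxGenEigenspace_eq_eigenspace]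
      _ = ⊤ := h
  let bC : ∀ μ : ℂ, Basis (Fin (finrank ℂ (A.eigenspace μ))) ℂ (A.eigenspace μ) :=
    fun μ => finBasis ℂ _
  let b := hint.collectedBasis bC
  haveI : Fintype ((μ : ℂ) × Fin (finrank ℂ (A.eigenspace μ))) :=
    FiniteDimensional.fintypeBasisIndex b
  have hmem : ∀ i, b i ∈ A.eigenspace i.1 := fun i => hint.collectedBasis_mem bC i
  have hA : ∀ i, A (b i) = i.1 • b i := fun i => (Module.End.mem_eigenspace_iff.mp (hmem i))
  have hev : ∀ i : (μ : ℂ) × Fin (finrank ℂ (A.eigenspace μ)), (i.1) ^ n = 1 := by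
    intro i
    have hv : Module.End.HasEigenvector A i.1 (b i) := ⟨hmem i, b.ne_zero i⟩
    have := hv.pow_apply n
    rw [hAn] at this
    simp only [Module.End.one_apply] at this
    have h2 : (i.1 ^ n - 1) • b i = 0 := by rw [sub_smul, one_smul, ← this, sub_self]
    rcases smul_eq_zero.mp h2 with h | h
    · have := sub_eq_zero.mp h; linear_combination this
    · exact absurd h (b.ne_zero i)
  have hBv : ∀ i : (μ : ℂ) × Fin (finrank ℂ (A.eigenspace μ)), B (b i) = (i.1)⁻¹ • b i := by
    intro i
    have hne : i.1 ≠ 0 := by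
      intro h0'
      have := hev i
      rw [h0', zero_pow hn.ne'] at this
      exact zero_ne_one this
    have h1 : B (A (b i)) = b i := by
      have := congrArg (fun f : Module.End ℂ V => f (b i)) hBA
      simpa [Module.End.mul_apply] using this
    rw [hA i, map_smul] at h1
    calc B (b i) = i.fst⁻¹ • (i.fst • B (b i)) := by
          rw [smul_smul, inv_mul_cancel₀ hne, one_smul]
      _ = i.fst⁻¹ • b i := by rw [h1]
  have hnorm : ∀ i : (μ : ℂ) × Fin (finrank ℂ (A.eigenspace μ)), (i.1)⁻¹ = starRingEnd ℂ i.1 := by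
    intro i
    apply Complex.inv_eq_conj
    have h1 : ‖i.1‖ ^ n = 1 := by
      rw [← norm_pow, hev i, norm_one]
    have h2 := norm_nonneg i.1
    rcases pow_eq_one_iff_cases.mp h1 with h | h | h
    · omega
    · exact h
    · nlinarith
  have trA : LinearMap.trace ℂ V A = ∑ i : (μ : ℂ) × Fin (finrank ℂ (A.eigenspace μ)), i.1 := by
    rw [LinearMap.trace_eq_matrix_trace ℂ b A, Matrix.trace]
    refine Finset.sum_congr rfl fun i _ => ?_
    rw [Matrix.diag_apply, LinearMap.toMatrix_apply, hA i, map_smul]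
    simp [b.repr_self]
  have trB : LinearMap.trace ℂ V B = ∑ i : (μ : ℂ) × Fin (finrank ℂ (A.eigenspace μ)), (i.1)⁻¹ := by
    rw [LinearMap.trace_eq_matrix_trace ℂ b B, Matrix.trace]
    refine Finset.sum_congr rfl fun i _ => ?_
    rw [Matrix.diag_apply, LinearMap.toMatrix_apply, hBv i, map_smul]
    simp [b.repr_self]
  rw [trA, trB, map_sum]
  exact Finset.sum_congr rfl fun i _ => hnorm i


variable {G : Type} [Group G] [Fintype G]


lemma my_char_inv {G : Type} [Group G] [Fintype G] (V : FDRep ℂ G) (g : G) :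
    V.character g⁻¹ = starRingEnd ℂ (V.character g) := by
  show LinearMap.trace ℂ V (V.ρ g⁻¹) = starRingEnd ℂ (LinearMap.trace ℂ V (V.ρ g))
  refine trace_inv_eq_conj (V.ρ g) (V.ρ g⁻¹) (orderOf g) (orderOf_pos g) ?_ ?_
  · rw [← map_pow, pow_orderOf_eq_one, map_one]
  · rw [← map_mul, mul_inv_cancel, map_one]

lemma my_finrank_hom {G : Type} [Group G] [Fintype G] [Invertible (Fintype.card G : ℂ)]
    (V W : FDRep ℂ G) :
    ⅟(Fintype.card G : ℂ) • ∑ g : G, V.character g * W.character g⁻¹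
      = (finrank ℂ (W ⟶ V) : ℂ) := by
  classical
  conv_lhs =>
    enter [2, 2, g]
    rw [mul_comm, ← char_dual, ← Pi.mul_apply, ← char_tensor]
    rw [char_iso (FDRep.dualTensorIsoLinHom W.ρ V)]
  haveI : Invertible (Nat.card G : ℂ) := by rwa [Nat.card_eq_fintype_card]
  rw [invOf_eq_inv, smul_eq_mul, ← Nat.card_eq_fintype_card, average_char_eq_finrank_invariants,
    ← LinearEquiv.finrank_eq (Representation.linHom.invariantsEquivFDRepHom W V), of_ρ']

omit [Fintype G] in
lemma my_comm {X Y : FDRep ℂ G} (f : Y ⟶ X) (g : G) :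
    (f.hom.hom.hom : ↑Y.V →ₗ[ℂ] ↑X.V).comp (Y.ρ g) = (X.ρ g).comp (f.hom.hom.hom : ↑Y.V →ₗ[ℂ] ↑X.V) :=
  LinearMap.ext fun x => congrArg (fun φ => φ.hom.hom x) (f.comm g)

omit [Fintype G] in
lemma my_mono_inj {X Y : FDRep ℂ G} (f : Y ⟶ X) [Mono f] :
    LinearMap.ker (f.hom.hom.hom : ↑Y.V →ₗ[ℂ] ↑X.V) = ⊥ := by
  classical
  set F := (f.hom.hom.hom : ↑Y.V →ₗ[ℂ] ↑X.V) with hF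
  have hmap : ∀ g : G, ∀ y ∈ LinearMap.ker F, Y.ρ g y ∈ LinearMap.ker F := by
    intro g y hy
    have hy0 : (f.hom.hom.hom : ↑Y.V →ₗ[ℂ] ↑X.V) y = 0 := hy
    have h2 := LinearMap.congr_fun (my_comm f g) y
    have h3 : (X.ρ g) ((f.hom.hom.hom : ↑Y.V →ₗ[ℂ] ↑X.V) y) = 0 := by rw [hy0]; exact map_zero _
    exact LinearMap.mem_ker.mpr (h2.trans h3)
  set K := LinearMap.ker F
  let ρK : Representation ℂ G K :=
    { toFun := fun g => (Y.ρ g).restrict (hmap g)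
      map_one' := by
        refine LinearMap.ext fun x => Subtype.ext ?_
        simp [LinearMap.restrict_apply]
      map_mul' := by
        intro g h
        refine LinearMap.ext fun x => Subtype.ext ?_
        simp only [LinearMap.restrict_apply, Module.End.mul_apply, map_mul] }
  let Z : FDRep ℂ G := FDRep.of ρK
  let u : Z ⟶ Y :=
    { hom := (ConcreteCategory.ofHom (K.subtype : ↑Z.V →ₗ[ℂ] ↑Y.V) : Z.V ⟶ Y.V)
      comm := by intro g; rfl }
  have hu : u ≫ f = (0 : Z ⟶ Y) ≫ f := by
    apply Action.Hom.ext
    ext ⟨y, hy⟩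
    simp
    exact hy
  have hu0 := (cancel_mono f).mp hu
  rw [eq_bot_iff]
  intro y hy
  have h3 : u.hom ⟨y, hy⟩ = (0 : Z ⟶ Y).hom ⟨y, hy⟩ := by rw [hu0]
  exact h3

lemma sum_comp' {ι M N P : Type*} [AddCommGroup M] [AddCommGroup N] [AddCommGroup P]
    [Module ℂ M] [Module ℂ N] [Module ℂ P]
    (s : Finset ι) (f : ι → N →ₗ[ℂ] P) (g : M →ₗ[ℂ] N) :
    (∑ i ∈ s, f i) ∘ₗ g = ∑ i ∈ s, (f i ∘ₗ g) := by
  ext x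
  simp [LinearMap.sum_apply]

lemma comp_sum' {ι M N P : Type*} [AddCommGroup M] [AddCommGroup N] [AddCommGroup P]
    [Module ℂ M] [Module ℂ N] [Module ℂ P]
    (s : Finset ι) (f : ι → M →ₗ[ℂ] N) (g : N →ₗ[ℂ] P) :
    g ∘ₗ (∑ i ∈ s, f i) = ∑ i ∈ s, (g ∘ₗ f i) := by
  ext x
  simp [LinearMap.sum_apply]

lemma my_split {X Y : FDRep ℂ G} (f : Y ⟶ X) [Mono f] : ∃ r : X ⟶ Y, f ≫ r = 𝟙 Y := by
  classical
  obtain ⟨π₀, hπ₀⟩ :=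
    (f.hom.hom.hom : ↑Y.V →ₗ[ℂ] ↑X.V).exists_leftInverse_of_injective (my_mono_inj f)
  set F := (f.hom.hom.hom : ↑Y.V →ₗ[ℂ] ↑X.V) with hF
  have keyX : ∀ a b : G, (X.ρ a) ∘ₗ (X.ρ b) = X.ρ (a * b) := fun a b => by
    rw [map_mul]; rfl
  have keyY : ∀ a b : G, (Y.ρ a) ∘ₗ (Y.ρ b) = Y.ρ (a * b) := fun a b => by
    rw [map_mul]; rfl
  set c : ℂ := (Fintype.card G : ℂ)⁻¹ with hc
  set π : ↑X.V →ₗ[ℂ] ↑Y.V :=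
    c • ∑ g : G, (Y.ρ g⁻¹) ∘ₗ π₀ ∘ₗ (X.ρ g) with hπ
  have hcomm : ∀ h : G, π ∘ₗ (X.ρ h) = (Y.ρ h) ∘ₗ π := by
    intro h
    calc π ∘ₗ (X.ρ h)
        = c • ∑ g : G, (Y.ρ g⁻¹) ∘ₗ π₀ ∘ₗ (X.ρ (g * h)) := by
          rw [hπ, LinearMap.smul_comp]
          congr 1
          rw [sum_comp']
          refine Finset.sum_congr rfl fun g _ => ?_
          rw [LinearMap.comp_assoc, LinearMap.comp_assoc, keyX]
      _ = c • ∑ g : G, (Y.ρ (h * g⁻¹)) ∘ₗ π₀ ∘ₗ (X.ρ g) := by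
          congr 1
          refine Fintype.sum_equiv (Equiv.mulRight h)
            (fun g => (Y.ρ g⁻¹) ∘ₗ π₀ ∘ₗ (X.ρ (g * h)))
            (fun g => (Y.ρ (h * g⁻¹)) ∘ₗ π₀ ∘ₗ (X.ρ g)) fun g => ?_
          simp only [Equiv.coe_mulRight, mul_inv_rev, mul_inv_cancel_left]
      _ = (Y.ρ h) ∘ₗ π := by
          rw [hπ, LinearMap.comp_smul]
          congr 1
          rw [comp_sum']
          refine Finset.sum_congr rfl fun g _ => ?_
          rw [← LinearMap.comp_assoc, ← LinearMap.comp_assoc, keyY]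
          rw [LinearMap.comp_assoc]
  have hcard : (Fintype.card G : ℂ) ≠ 0 := Nat.cast_ne_zero.mpr Fintype.card_ne_zero
  have hretr : π ∘ₗ F = LinearMap.id := by
    have hterm : ∀ g : G, (Y.ρ g⁻¹) ∘ₗ (π₀ ∘ₗ (X.ρ g)) ∘ₗ F = LinearMap.id := by
      intro g
      have h1 : (X.ρ g) ∘ₗ F = F ∘ₗ (Y.ρ g) := (my_comm f g).symm
      rw [LinearMap.comp_assoc, h1]
      have hassoc : (Y.ρ g⁻¹) ∘ₗ π₀ ∘ₗ F ∘ₗ (Y.ρ g)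
          = (Y.ρ g⁻¹) ∘ₗ (π₀ ∘ₗ F) ∘ₗ (Y.ρ g) := rfl
      rw [hassoc, hπ₀, LinearMap.id_comp, keyY, inv_mul_cancel, map_one]
      rfl
    calc π ∘ₗ F = c • ∑ g : G, ((Y.ρ g⁻¹) ∘ₗ (π₀ ∘ₗ (X.ρ g)) ∘ₗ F) := by
          rw [hπ, LinearMap.smul_comp, sum_comp']
          congr 1
      _ = c • (Fintype.card G : ℂ) • LinearMap.id := by
          rw [Finset.sum_congr rfl fun g _ => hterm g]
          rw [Finset.sum_const, Finset.card_univ]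
          exact congrArg (c • ·) (Nat.cast_smul_eq_nsmul ℂ _ _).symm
      _ = LinearMap.id := by rw [hc, smul_smul, inv_mul_cancel₀ hcard, one_smul]
  refine ⟨{ hom := (ConcreteCategory.ofHom π : X.V ⟶ Y.V), comm := fun g => ?_ }, ?_⟩
  · ext x
    exact LinearMap.congr_fun (hcomm g) x
  · apply Action.Hom.ext
    ext x
    exact LinearMap.congr_fun hretr x

lemma my_id_ne_zero (X : FDRep ℂ G) [Nontrivial X] : (𝟙 X : X ⟶ X) ≠ 0 := by
  intro h
  obtain ⟨x, hx⟩ := exists_ne (0 : X)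
  have h2 := congrArg Action.Hom.hom h
  have h3 : x = (0 : X) :=
    congrFun (congrArg (fun (h : X.V ⟶ X.V) => (h : X → X)) h2) x
  exact hx h3

lemma my_simple (X : FDRep ℂ G) [Nontrivial X] (hdim : finrank ℂ (X ⟶ X) = 1) :
    Simple X := by
  have hid := my_id_ne_zero X
  have hsc : ∀ w : X ⟶ X, ∃ c : ℂ, c • 𝟙 X = w :=
    (finrank_eq_one_iff_of_nonzero' (𝟙 X) hid).mp hdim
  constructor
  intro Y f mf
  constructor
  · intro hiso h0
    have h5 := IsIso.inv_hom_id f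
    have h6 : inv f ≫ f = inv f ≫ 0 := by rw [← h0]
    rw [Limits.comp_zero] at h6
    exact hid (h5.symm.trans h6)
  · intro hf0
    obtain ⟨r, hr⟩ := my_split f
    obtain ⟨c, hc⟩ := hsc (r ≫ f)
    have hidem : (r ≫ f) ≫ (r ≫ f) = r ≫ f := by
      rw [Category.assoc, ← Category.assoc f r f, hr, Category.id_comp]
    have hc2 : (c * c) • 𝟙 X = c • 𝟙 X := by
      have h6 : (c • 𝟙 X : X ⟶ X) ≫ (c • 𝟙 X) = (c * c) • 𝟙 X := by
        rw [Linear.smul_comp, Linear.comp_smul, smul_smul, Category.id_comp]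
      rw [← h6, hc]
      exact hidem
    have hcc : c * c = c := by
      have h4 : (c * c - c) • (𝟙 X : X ⟶ X) = 0 := by
        rw [sub_smul, hc2, sub_self]
      rcases smul_eq_zero.mp h4 with h | h
      · exact sub_eq_zero.mp h
      · exact absurd h hid
    have hcases : c = 0 ∨ c = 1 := by
      have h8 : c * (c - 1) = 0 := by linear_combination hcc
      rcases mul_eq_zero.mp h8 with h | h
      · exact Or.inl h
      · exact Or.inr (by linear_combination h)
    rcases hcases with h | h
    · exfalso
      have h7 : f = f ≫ (r ≫ f) := by
        rw [← Category.assoc, hr, Category.id_comp]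
      rw [← hc, h, zero_smul, Limits.comp_zero] at h7
      exact hf0 h7
    · exact ⟨⟨r, hr, by rw [← hc, h, one_smul]⟩⟩


end Aux

theorem stmt_1 {G : Type} [Group G] [Fintype G]
    (ρ₁ ρ₂ : FDRep ℂ G) (k : ℕ) (hk : 0 < k)
    (h : ∀ g : G, ρ₁.character g ^ k = ρ₂.character g ^ k)
    [Simple ρ₁] [Nontrivial ρ₂] : Simple ρ₂ := by
  classical
  haveI : Invertible (Fintype.card G : ℂ) :=
    invertibleOfNonzero (Nat.cast_ne_zero.mpr Fintype.card_ne_zero)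
  have e1 : ∀ (V : FDRep ℂ G) (g : G),
      V.character g * V.character g⁻¹ = (Complex.normSq (V.character g) : ℂ) := by
    intro V g
    rw [my_char_inv V g, Complex.mul_conj]
  have key : ∀ g : G, ρ₂.character g * ρ₂.character g⁻¹
      = ρ₁.character g * ρ₁.character g⁻¹ := by
    intro g
    rw [e1 ρ₁, e1 ρ₂]
    norm_cast
    have hp : (Complex.normSq (ρ₁.character g)) ^ k
        = (Complex.normSq (ρ₂.character g)) ^ k := by
      have hmul : (ρ₁.character g * ρ₁.character g⁻¹) ^ k
          = (ρ₂.character g * ρ₂.character g⁻¹) ^ k := by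
        rw [mul_pow, mul_pow, h g, h g⁻¹]
      rw [e1 ρ₁, e1 ρ₂] at hmul
      exact_mod_cast hmul
    exact ((pow_left_strictMonoOn₀ hk.ne').injOn
      (Set.mem_setOf.mpr (Complex.normSq_nonneg _))
      (Set.mem_setOf.mpr (Complex.normSq_nonneg _)) hp).symm
  have hsum : ⅟(Fintype.card G : ℂ) • ∑ g : G, ρ₂.character g * ρ₂.character g⁻¹
      = ⅟(Fintype.card G : ℂ) • ∑ g : G, ρ₁.character g * ρ₁.character g⁻¹ := by
    congr 1
    exact Finset.sum_congr rfl fun g _ => key g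
  rw [my_finrank_hom ρ₂ ρ₂, my_finrank_hom ρ₁ ρ₁] at hsum
  have hnat : finrank ℂ (ρ₂ ⟶ ρ₂) = finrank ℂ (ρ₁ ⟶ ρ₁) := Nat.cast_injective hsum
  have h1' : finrank ℂ (ρ₁ ⟶ ρ₁) = 1 :=
    CategoryTheory.finrank_endomorphism_simple_eq_one ℂ ρ₁
  exact my_simple ρ₂ (hnat.trans h1')
end

section
/- Let n be a positive integer and let λ₁ ≥ λ₂ ≥ ... ≥ λₙ and μ₁ ≥ μ₂ ≥ ... ≥ μₙ be real numbers. Fix a positive integer k. If the multiset of all sums Σᵢ kᵢλᵢ over tuples of nonnegative integers (k₁,...,kₙ) with Σᵢ kᵢ = k equals the corresponding multiset of sums Σᵢ kᵢμᵢ, then λᵢ = μᵢ for all i. -/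
open Classical in
private lemma stmt3_key (n : ℕ) (hn : 0 < n) (lam mu : Fin n → ℝ)
    (hlam : Antitone lam) (hmu : Antitone mu) (k : ℕ) (hk : 0 < k)
    (h : ((Finset.Nat.antidiagonalTuple n k).val.map
        (fun c : Fin n → ℕ => ∑ i, (c i : ℝ) * lam i)) =
      ((Finset.Nat.antidiagonalTuple n k).val.map
        (fun c : Fin n → ℕ => ∑ i, (c i : ℝ) * mu i)))
    (j : Fin n) (hj : ∀ i, i < j → lam i = mu i) (hlt : mu j < lam j) :
    False := by
  classical
  set i0 : Fin n := ⟨0, hn⟩ with hi0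
  have hbot : ∀ i : Fin n, i0 ≤ i := fun i => by
    simp [Fin.le_def, hi0]
  set t : ℝ := ((k - 1 : ℕ) : ℝ) * lam i0 + lam j with ht
  set A := Finset.Nat.antidiagonalTuple n k with hA
  -- the key bound: any tuple touching index ≥ j has mu-sum < t
  have hbound : ∀ c : Fin n → ℕ, (∑ i, c i) = k →
      ∀ i1 : Fin n, j ≤ i1 → c i1 ≠ 0 → ∑ i, (c i : ℝ) * mu i < t := by
    intro c hc i1 hji1 hc1
    set S : Finset (Fin n) := Finset.univ.filter (fun i => j ≤ i) with hS
    set m : ℕ := ∑ i ∈ S, c i with hm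
    have hi1S : i1 ∈ S := by simp [hS, hji1]
    have hm1 : 1 ≤ m := le_trans (Nat.one_le_iff_ne_zero.2 hc1)
      (Finset.single_le_sum (fun i _ => Nat.zero_le (c i)) hi1S)
    have hsplitc : (∑ i ∈ S, c i) + (∑ i ∈ Finset.univ.filter (fun i => ¬ j ≤ i), c i) = k := by
      rw [Finset.sum_filter_add_sum_filter_not]; exact hc
    have hmk : m ≤ k := by omega
    have hrest : (∑ i ∈ Finset.univ.filter (fun i => ¬ j ≤ i), c i) = k - m := by omega
    have hsplit : (∑ i, (c i : ℝ) * mu i) =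
        (∑ i ∈ S, (c i : ℝ) * mu i) +
        (∑ i ∈ Finset.univ.filter (fun i => ¬ j ≤ i), (c i : ℝ) * mu i) := by
      rw [Finset.sum_filter_add_sum_filter_not]
    have hB : (∑ i ∈ S, (c i : ℝ) * mu i) ≤ (m : ℝ) * mu j := by
      have : (∑ i ∈ S, (c i : ℝ) * mu i) ≤ ∑ i ∈ S, (c i : ℝ) * mu j := by
        refine Finset.sum_le_sum fun i hi => ?_
        have hji : j ≤ i := by simpa [hS] using hi
        exact mul_le_mul_of_nonneg_left (hmu hji) (by positivity)
      simpa [← Finset.sum_mul, hm] using this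
    have hC : (∑ i ∈ Finset.univ.filter (fun i => ¬ j ≤ i), (c i : ℝ) * mu i) ≤
        ((k - m : ℕ) : ℝ) * lam i0 := by
      have : (∑ i ∈ Finset.univ.filter (fun i => ¬ j ≤ i), (c i : ℝ) * mu i) ≤
          ∑ i ∈ Finset.univ.filter (fun i => ¬ j ≤ i), (c i : ℝ) * lam i0 := by
        refine Finset.sum_le_sum fun i hi => ?_
        have hij : i < j := by
          have : ¬ j ≤ i := by simpa using hi
          exact lt_of_not_ge this
        have : mu i ≤ lam i0 := by
          rw [← hj i hij]; exact hlam (hbot i)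
        exact mul_le_mul_of_nonneg_left this (by positivity)
      calc (∑ i ∈ Finset.univ.filter (fun i => ¬ j ≤ i), (c i : ℝ) * mu i)
          ≤ ∑ i ∈ Finset.univ.filter (fun i => ¬ j ≤ i), (c i : ℝ) * lam i0 := this
        _ = ((k - m : ℕ) : ℝ) * lam i0 := by
            rw [← Finset.sum_mul, ← Nat.cast_sum, hrest]
    have hjle : lam j ≤ lam i0 := hlam (hbot j)
    have hkm : ((k - m : ℕ) : ℝ) = (k : ℝ) - (m : ℝ) := by
      push_cast [Nat.cast_sub hmk]; ring
    have hk1 : ((k - 1 : ℕ) : ℝ) = (k : ℝ) - 1 := by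
      push_cast [Nat.cast_sub hk]; ring
    have hm1' : (1 : ℝ) ≤ (m : ℝ) := by exact_mod_cast hm1
    have hstrict : (m : ℝ) * mu j < (m : ℝ) * lam j :=
      mul_lt_mul_of_pos_left hlt (by linarith)
    rw [hkm] at hC
    rw [hsplit, ht, hk1]
    nlinarith [hB, hC, hstrict, mul_nonneg (sub_nonneg.2 hm1') (sub_nonneg.2 hjle)]
  -- the witness tuple
  set cstar : Fin n → ℕ :=
    fun i => (if i = i0 then k - 1 else 0) + (if i = j then 1 else 0) with hcstar
  have hcstar_sum : (∑ i, cstar i) = k := by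
    simp only [hcstar, Finset.sum_add_distrib, Finset.sum_ite_eq' Finset.univ,
      Finset.mem_univ, if_true]
    omega
  have hcstar_mem : cstar ∈ A := by
    rw [hA, Finset.Nat.mem_antidiagonalTuple]; exact hcstar_sum
  have hcstar_lam : (∑ i, (cstar i : ℝ) * lam i) = t := by
    rw [ht]
    simp only [hcstar]
    push_cast
    rw [show (∑ i, ((if i = i0 then ((k-1:ℕ):ℝ) else 0) + if i = j then (1:ℝ) else 0) * lam i)
        = (∑ i, (if i = i0 then ((k-1:ℕ):ℝ) * lam i else 0))
          + ∑ i, (if i = j then lam i else 0) by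
      rw [← Finset.sum_add_distrib]
      refine Finset.sum_congr rfl fun i _ => ?_
      split_ifs <;> ring]
    rw [Finset.sum_ite_eq' Finset.univ, Finset.sum_ite_eq' Finset.univ]
    simp
  have hcstar_mu : (∑ i, (cstar i : ℝ) * mu i) < t := by
    refine hbound cstar hcstar_sum j le_rfl ?_
    simp [hcstar]
  -- counting
  have hcount := congrArg (Multiset.countP (fun x : ℝ => t ≤ x)) h
  rw [Multiset.countP_map, Multiset.countP_map] at hcount
  have hsub : A.filter (fun c => t ≤ ∑ i, (c i : ℝ) * mu i) ⊆
      A.filter (fun c => t ≤ ∑ i, (c i : ℝ) * lam i) := by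
    intro c hc
    rw [Finset.mem_filter] at hc ⊢
    obtain ⟨hcA, hct⟩ := hc
    refine ⟨hcA, ?_⟩
    have hcsum : (∑ i, c i) = k := (Finset.Nat.mem_antidiagonalTuple).1 hcA
    by_cases hex : ∃ i1 : Fin n, j ≤ i1 ∧ c i1 ≠ 0
    · obtain ⟨i1, hji1, hc1⟩ := hex
      exact absurd hct (not_le.2 (hbound c hcsum i1 hji1 hc1))
    · push_neg at hex
      have : (∑ i, (c i : ℝ) * lam i) = ∑ i, (c i : ℝ) * mu i := by
        refine Finset.sum_congr rfl fun i _ => ?_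
        by_cases hji : j ≤ i
        · rw [hex i hji]; simp
        · rw [hj i (lt_of_not_ge hji)]
      rw [this]; exact hct
  have hssub : A.filter (fun c => t ≤ ∑ i, (c i : ℝ) * mu i) ⊂
      A.filter (fun c => t ≤ ∑ i, (c i : ℝ) * lam i) := by
    refine ⟨hsub, fun hsup => ?_⟩
    have h1 : cstar ∈ A.filter (fun c => t ≤ ∑ i, (c i : ℝ) * lam i) :=
      Finset.mem_filter.2 ⟨hcstar_mem, le_of_eq hcstar_lam.symm⟩
    have h2 := hsup h1
    rw [Finset.mem_filter] at h2
    exact absurd h2.2 (not_le.2 hcstar_mu)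
  have hcard := Finset.card_lt_card hssub
  rw [show (A.filter fun a => t ≤ ∑ i, (a i : ℝ) * lam i).card
      = Multiset.card (A.val.filter fun a => t ≤ ∑ i, (a i : ℝ) * lam i) from rfl,
    show (A.filter fun a => t ≤ ∑ i, (a i : ℝ) * mu i).card
      = Multiset.card (A.val.filter fun a => t ≤ ∑ i, (a i : ℝ) * mu i) from rfl] at hcard
  rw [hcount] at hcard
  exact lt_irrefl _ hcard

theorem stmt_3 (n : ℕ) (hn : 0 < n) (lam mu : Fin n → ℝ)
    (hlam : Antitone lam) (hmu : Antitone mu) (k : ℕ) (hk : 0 < k)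
    (h : ((Finset.Nat.antidiagonalTuple n k).val.map
        (fun c : Fin n → ℕ => ∑ i, (c i : ℝ) * lam i)) =
      ((Finset.Nat.antidiagonalTuple n k).val.map
        (fun c : Fin n → ℕ => ∑ i, (c i : ℝ) * mu i))) :
    lam = mu := by
  suffices H : ∀ m : ℕ, ∀ j : Fin n, (j : ℕ) = m → lam j = mu j by
    funext j; exact H j j rfl
  intro m
  induction m using Nat.strong_induction_on with
  | _ m ih =>
    intro j hjm
    have hj : ∀ i, i < j → lam i = mu i := fun i hij => by
      exact ih (i : ℕ) (hjm ▸ hij) i rfl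
    rcases lt_trichotomy (lam j) (mu j) with h1 | h1 | h1
    · exact absurd (stmt3_key n hn mu lam hmu hlam k hk h.symm j
        (fun i hij => (hj i hij).symm) h1) id
    · exact h1
    · exact absurd (stmt3_key n hn lam mu hlam hmu k hk h j hj h1) id
end

section
/- With notation as above (n an odd prime, a, b integers coprime to n, ρ_a, ρ_b the Heisenberg representations), the characters satisfy χ_a(h)ⁿ = χ_b(h)ⁿ for all h ∈ H_n; equivalently, the n-th tensor powers T^n(ρ_a) and T^n(ρ_b) have equal characters. However, if a ≢ b (mod n), there is no one-dimensional character η of H_n with ρ_a ≅ ρ_b ⊗ η. -/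
open Matrix
open Fin.NatCast

-- Group-theoretic normal form lemmas
section Grp
variable {G : Type*} [Group G] (A B C : G)

lemma aux_AB_pow (hBC : B * C = C * B) (hAB : A * B = C * B * A) :
    ∀ j : ℕ, A * B ^ j = C ^ j * B ^ j * A := by
  intro j
  induction j with
  | zero => simp
  | succ j ih =>
    have hcB : Commute C (B ^ j) := ((show Commute C B from hBC.symm).pow_right j)
    calc A * B ^ (j+1) = (A * B) * B ^ j := by rw [pow_succ']; group
    _ = C * B * (A * B ^ j) := by rw [hAB]; group
    _ = C * B * (C ^ j * B ^ j * A) := by rw [ih]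
    _ = C * (B * C ^ j) * B ^ j * A := by group
    _ = C * (C ^ j * B) * B ^ j * A := by
        rw [((show Commute B C from hBC).pow_right j).eq]
    _ = C ^ (j+1) * B ^ (j+1) * A := by rw [pow_succ, pow_succ']; group

lemma aux_pow_AB (hAC : A * C = C * A) (hBC : B * C = C * B)
    (hAB : A * B = C * B * A) :
    ∀ i j : ℕ, A ^ i * B ^ j = C ^ (i * j) * B ^ j * A ^ i := by
  intro i j
  induction i with
  | zero => simp
  | succ i ih =>
    calc A ^ (i+1) * B ^ j = A ^ i * (A * B ^ j) := by rw [pow_succ']; group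
    _ = A ^ i * (C ^ j * B ^ j * A) := by rw [aux_AB_pow A B C hBC hAB]
    _ = (A ^ i * C ^ j) * B ^ j * A := by group
    _ = (C ^ j * A ^ i) * B ^ j * A := by
        rw [((show Commute A C from hAC).pow_pow i j).eq]
    _ = C ^ j * (A ^ i * B ^ j) * A := by group
    _ = C ^ j * (C ^ (i * j) * B ^ j * A ^ i) * A := by rw [ih]
    _ = C ^ ((i+1) * j) * B ^ j * A ^ (i+1) := by
        rw [Nat.succ_mul, pow_add, pow_succ]; group

lemma aux_normal_form (n : ℕ) [NeZero n]
    (hA1 : A ^ n = 1) (hB1 : B ^ n = 1) (hC1 : C ^ n = 1)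
    (hAC : A * C = C * A) (hBC : B * C = C * B) (hAB : A * B = C * B * A)
    (hgen : Subgroup.closure ({A, B, C} : Set G) = ⊤) :
    ∀ h : G, ∃ i j k : ℕ, h = C ^ k * B ^ j * A ^ i := by
  have hcA : ∀ m i : ℕ, A ^ i * C ^ m = C ^ m * A ^ i :=
    fun m i => ((show Commute A C from hAC).pow_pow i m).eq
  have hcB : ∀ m j : ℕ, B ^ j * C ^ m = C ^ m * B ^ j :=
    fun m j => ((show Commute B C from hBC).pow_pow j m).eq
  have hinv : ∀ (X : G), X ^ n = 1 → ∀ i : ℕ, (X ^ i)⁻¹ = X ^ (i * (n-1)) := by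
    intro X hX i
    have h1 : X ^ i * X ^ (i * (n-1)) = 1 := by
      rw [← pow_add]
      have : i + i * (n - 1) = i * n := by
        have hn : 1 ≤ n := Nat.one_le_iff_ne_zero.mpr (NeZero.ne n)
        calc i + i * (n-1) = i * (1 + (n-1)) := by ring
        _ = i * n := by rw [Nat.add_sub_cancel' hn]
      rw [this, mul_comm, pow_mul, hX, one_pow]
    exact inv_eq_of_mul_eq_one_right h1
  intro h
  have hh : h ∈ Subgroup.closure ({A, B, C} : Set G) := hgen ▸ Subgroup.mem_top h
  induction hh using Subgroup.closure_induction with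
  | mem x hx =>
    rcases hx with rfl | rfl | rfl
    · exact ⟨1, 0, 0, by simp⟩
    · exact ⟨0, 1, 0, by simp⟩
    · exact ⟨0, 0, 1, by simp⟩
  | one => exact ⟨0, 0, 0, by simp⟩
  | mul x y _ _ hx hy =>
    obtain ⟨i, j, k, rfl⟩ := hx
    obtain ⟨i', j', k', rfl⟩ := hy
    refine ⟨i + i', j + j', k + k' + i * j', ?_⟩
    calc C ^ k * B ^ j * A ^ i * (C ^ k' * B ^ j' * A ^ i')
        = C ^ k * B ^ j * (A ^ i * C ^ k') * B ^ j' * A ^ i' := by group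
      _ = C ^ k * B ^ j * (C ^ k' * A ^ i) * B ^ j' * A ^ i' := by rw [hcA]
      _ = C ^ k * (B ^ j * C ^ k') * (A ^ i * B ^ j') * A ^ i' := by group
      _ = C ^ k * (C ^ k' * B ^ j) * (C ^ (i * j') * B ^ j' * A ^ i) * A ^ i' := by
          rw [hcB, aux_pow_AB A B C hAC hBC hAB]
      _ = C ^ k * C ^ k' * (B ^ j * C ^ (i * j')) * B ^ j' * (A ^ i * A ^ i') := by group
      _ = C ^ k * C ^ k' * (C ^ (i * j') * B ^ j) * B ^ j' * (A ^ i * A ^ i') := by rw [hcB]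
      _ = C ^ (k + k' + i * j') * B ^ (j + j') * A ^ (i + i') := by
          rw [pow_add, pow_add, pow_add, pow_add]; group
  | inv x _ hx =>
    obtain ⟨i, j, k, rfl⟩ := hx
    refine ⟨i * (n-1), j * (n-1), k * (n-1) + (i * (n-1)) * (j * (n-1)), ?_⟩
    calc (C ^ k * B ^ j * A ^ i)⁻¹ = (A ^ i)⁻¹ * (B ^ j)⁻¹ * (C ^ k)⁻¹ := by group
      _ = A ^ (i * (n-1)) * B ^ (j * (n-1)) * C ^ (k * (n-1)) := by
          rw [hinv A hA1, hinv B hB1, hinv C hC1]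
      _ = (A ^ (i * (n-1)) * B ^ (j * (n-1))) * C ^ (k * (n-1)) := by group
      _ = C ^ (i * (n-1) * (j * (n-1))) * B ^ (j * (n-1)) * A ^ (i * (n-1))
            * C ^ (k * (n-1)) := by rw [aux_pow_AB A B C hAC hBC hAB]
      _ = C ^ (i * (n-1) * (j * (n-1))) * B ^ (j * (n-1))
            * (A ^ (i * (n-1)) * C ^ (k * (n-1))) := by group
      _ = C ^ (i * (n-1) * (j * (n-1))) * B ^ (j * (n-1))
            * (C ^ (k * (n-1)) * A ^ (i * (n-1))) := by rw [hcA]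
      _ = C ^ (k * (n-1) + i * (n-1) * (j * (n-1))) * B ^ (j * (n-1))
            * A ^ (i * (n-1)) := by
          rw [pow_add]
          calc C ^ (i * (n-1) * (j * (n-1))) * B ^ (j * (n-1))
                * (C ^ (k * (n-1)) * A ^ (i * (n-1)))
              = C ^ (i * (n-1) * (j * (n-1))) * (B ^ (j * (n-1)) * C ^ (k * (n-1)))
                * A ^ (i * (n-1)) := by group
            _ = C ^ (i * (n-1) * (j * (n-1))) * (C ^ (k * (n-1)) * B ^ (j * (n-1)))
                * A ^ (i * (n-1)) := by rw [hcB]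
            _ = C ^ (k * (n-1)) * C ^ (i * (n-1) * (j * (n-1))) * B ^ (j * (n-1))
                * A ^ (i * (n-1)) := by
                rw [((Commute.refl C).pow_pow _ _).eq]; group
end Grp


lemma aux_shift_pow (n : ℕ) [NeZero n] (j : ℕ) :
    (Matrix.of fun p q : Fin n => if p = q + 1 then (1:ℂ) else 0) ^ j =
    Matrix.of fun p q : Fin n => if p = q + (j : Fin n) then 1 else 0 := by
  induction j with
  | zero => ext p q; simp [Matrix.one_apply]
  | succ j ih =>
    rw [pow_succ, ih]
    ext p q
    rw [Matrix.mul_apply]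
    have h1 : ∀ r : Fin n,
        (Matrix.of fun p q : Fin n => if p = q + (j:Fin n) then (1:ℂ) else 0) p r *
        (Matrix.of fun p q : Fin n => if p = q + 1 then (1:ℂ) else 0) r q =
        if r = q + 1 then (if p = r + (j:Fin n) then (1:ℂ) else 0) else 0 := by
      intro r
      by_cases h : r = q + 1 <;> simp [Matrix.of_apply, h]
    rw [Finset.sum_congr rfl (fun r _ => h1 r),
      Finset.sum_ite_eq' Finset.univ (q+1) (fun r => if p = r + (j:Fin n) then (1:ℂ) else 0)]
    simp only [Matrix.of_apply, Finset.mem_univ, if_true]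
    congr 1
    push_cast
    abel_nf

lemma aux_trace_pow (n : ℕ) [NeZero n] (ξ : ℂ) (hξ : IsPrimitiveRoot ξ n)
    (c : ℤ) (hc : IsCoprime c (n:ℤ)) (i j k : ℕ) :
    (((ξ ^ c • (1 : Matrix (Fin n) (Fin n) ℂ)) ^ k *
      (Matrix.of fun p q : Fin n => if p = q + 1 then (1:ℂ) else 0) ^ j *
      (Matrix.diagonal fun m : Fin n => ξ ^ ((m:ℤ) * c)) ^ i).trace) ^ n
      = if n ∣ j ∧ n ∣ i then (n:ℂ)^n else 0 := by
  have hξ0 : ξ ≠ 0 := hξ.ne_zero (NeZero.ne n)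
  have hξn : ξ ^ (n:ℤ) = 1 := by rw [zpow_natCast]; exact hξ.pow_eq_one
  have e1 : (ξ ^ c • (1 : Matrix (Fin n) (Fin n) ℂ)) ^ k = ((ξ^c)^k) • 1 := by
    rw [smul_pow, one_pow]
  rw [e1, aux_shift_pow, Matrix.diagonal_pow, smul_mul_assoc, smul_mul_assoc, one_mul,
    Matrix.trace_smul, smul_eq_mul, mul_pow]
  have hsn : ((ξ^c)^k)^n = 1 := by
    rw [← zpow_natCast (ξ^c) k, ← _root_.zpow_mul, ← zpow_natCast _ n, ← _root_.zpow_mul]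
    have : c * (k:ℤ) * n = (n:ℤ) * (c * k) := by ring
    rw [this, _root_.zpow_mul, hξn, _root_.one_zpow]
  rw [hsn, one_mul]
  have htr : ((Matrix.of fun p q : Fin n => if p = q + (j : Fin n) then (1:ℂ) else 0) *
      Matrix.diagonal ((fun m : Fin n => ξ ^ ((m:ℤ) * c)) ^ i)).trace =
      ∑ p : Fin n, (if p = p + (j : Fin n) then (1:ℂ) else 0) * (ξ ^ ((p:ℤ) * c))^i := by
    rw [Matrix.trace]
    refine Finset.sum_congr rfl fun p _ => ?_
    rw [Matrix.diag_apply, Matrix.mul_diagonal]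
    simp [Pi.pow_apply]
  rw [htr]
  by_cases hj : n ∣ j
  · have hj0 : (j : Fin n) = 0 := Fin.natCast_eq_zero.mpr hj
    have e2 : ∀ p : Fin n, (if p = p + (j : Fin n) then (1:ℂ) else 0) * (ξ ^ ((p:ℤ) * c))^i
        = (ξ ^ (c * (i:ℤ)))^(p:ℕ) := by
      intro p
      rw [hj0, add_zero, if_pos rfl, one_mul, ← zpow_natCast (ξ ^ ((p:ℤ) * c)) i,
        ← _root_.zpow_mul, ← zpow_natCast (ξ ^ (c * (i:ℤ))) (p:ℕ), ← _root_.zpow_mul]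
      congr 1
      ring
    rw [Finset.sum_congr rfl (fun p _ => e2 p), Fin.sum_univ_eq_sum_range]
    by_cases hi : n ∣ i
    · have hz1 : ξ ^ (c * (i:ℤ)) = 1 :=
        (hξ.zpow_eq_one_iff_dvd _).mpr (Dvd.dvd.mul_left (Int.natCast_dvd_natCast.mpr hi) c)
      simp [hz1, hj, hi]
    · have hz1 : ξ ^ (c * (i:ℤ)) ≠ 1 := by
        intro h
        exact hi (Int.natCast_dvd_natCast.mp
          (hc.symm.dvd_of_dvd_mul_left ((hξ.zpow_eq_one_iff_dvd _).mp h)))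
      have hzn : (ξ ^ (c * (i:ℤ)))^n = 1 := by
        rw [← zpow_natCast _ n, ← _root_.zpow_mul]
        have : c * (i:ℤ) * n = (n:ℤ) * (c * i) := by ring
        rw [this, _root_.zpow_mul, hξn, _root_.one_zpow]
      rw [geom_sum_eq hz1, hzn]
      simp [hi, zero_pow (NeZero.ne n)]
  · have hj0 : (j : Fin n) ≠ 0 := fun h => hj (Fin.natCast_eq_zero.mp h)
    have e2 : ∀ p : Fin n, (if p = p + (j : Fin n) then (1:ℂ) else 0) * (ξ ^ ((p:ℤ) * c))^i = 0 := by
      intro p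
      rw [if_neg, zero_mul]
      rw [left_eq_add]
      exact hj0
    rw [Finset.sum_congr rfl (fun p _ => e2 p)]
    simp [hj, zero_pow (NeZero.ne n)]


theorem stmt_14 (n : ℕ) (hn : n.Prime) (hodd : Odd n) [NeZero n]
    {G : Type*} [Group G] (A B C : G)
    (hA1 : A ^ n = 1) (hB1 : B ^ n = 1) (hC1 : C ^ n = 1)
    (hAC : A * C = C * A) (hBC : B * C = C * B) (hAB : A * B = C * B * A)
    (hgen : Subgroup.closure ({A, B, C} : Set G) = ⊤)
    (ξ : ℂ) (hξ : IsPrimitiveRoot ξ n)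
    (a b : ℤ) (ha : IsCoprime a (n : ℤ)) (hb : IsCoprime b (n : ℤ))
    (ρa ρb : G →* Matrix.GeneralLinearGroup (Fin n) ℂ)
    (hρaA : (ρa A : Matrix (Fin n) (Fin n) ℂ) =
      Matrix.diagonal (fun i : Fin n => ξ ^ ((i : ℤ) * a)))
    (hρaB : ∀ i j : Fin n, (ρa B : Matrix (Fin n) (Fin n) ℂ) i j =
      if i = j + 1 then 1 else 0)
    (hρaC : (ρa C : Matrix (Fin n) (Fin n) ℂ) =
      ξ ^ a • (1 : Matrix (Fin n) (Fin n) ℂ))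
    (hρbA : (ρb A : Matrix (Fin n) (Fin n) ℂ) =
      Matrix.diagonal (fun i : Fin n => ξ ^ ((i : ℤ) * b)))
    (hρbB : ∀ i j : Fin n, (ρb B : Matrix (Fin n) (Fin n) ℂ) i j =
      if i = j + 1 then 1 else 0)
    (hρbC : (ρb C : Matrix (Fin n) (Fin n) ℂ) =
      ξ ^ b • (1 : Matrix (Fin n) (Fin n) ℂ)) :
    (∀ h : G, (ρa h : Matrix (Fin n) (Fin n) ℂ).trace ^ n =
      (ρb h : Matrix (Fin n) (Fin n) ℂ).trace ^ n) ∧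
    (¬ a ≡ b [ZMOD (n : ℕ)] →
      ¬ ∃ (η : G →* ℂˣ) (P : Matrix.GeneralLinearGroup (Fin n) ℂ),
        ∀ g : G, (ρa g : Matrix (Fin n) (Fin n) ℂ) =
          (P : Matrix (Fin n) (Fin n) ℂ) *
            ((η g : ℂ) • (ρb g : Matrix (Fin n) (Fin n) ℂ)) *
              ((P⁻¹ : Matrix.GeneralLinearGroup (Fin n) ℂ) :
                Matrix (Fin n) (Fin n) ℂ)) := by
  have hξ0 : ξ ≠ 0 := hξ.ne_zero (NeZero.ne n)
  constructor
  · intro h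
    obtain ⟨i, j, k, rfl⟩ := aux_normal_form A B C n hA1 hB1 hC1 hAC hBC hAB hgen h
    have hBa : (ρa B : Matrix (Fin n) (Fin n) ℂ) =
        Matrix.of fun p q : Fin n => if p = q + 1 then (1:ℂ) else 0 :=
      Matrix.ext fun p q => by rw [hρaB]; rfl
    have hBb : (ρb B : Matrix (Fin n) (Fin n) ℂ) =
        Matrix.of fun p q : Fin n => if p = q + 1 then (1:ℂ) else 0 :=
      Matrix.ext fun p q => by rw [hρbB]; rfl
    have ea : (ρa (C ^ k * B ^ j * A ^ i) : Matrix (Fin n) (Fin n) ℂ) =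
        (ρa C : Matrix (Fin n) (Fin n) ℂ) ^ k * (ρa B : Matrix (Fin n) (Fin n) ℂ) ^ j *
        (ρa A : Matrix (Fin n) (Fin n) ℂ) ^ i := by
      rw [_root_.map_mul, _root_.map_mul, map_pow, map_pow, map_pow, Units.val_mul, Units.val_mul,
        Units.val_pow_eq_pow_val, Units.val_pow_eq_pow_val, Units.val_pow_eq_pow_val]
    have eb : (ρb (C ^ k * B ^ j * A ^ i) : Matrix (Fin n) (Fin n) ℂ) =
        (ρb C : Matrix (Fin n) (Fin n) ℂ) ^ k * (ρb B : Matrix (Fin n) (Fin n) ℂ) ^ j *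
        (ρb A : Matrix (Fin n) (Fin n) ℂ) ^ i := by
      rw [_root_.map_mul, _root_.map_mul, map_pow, map_pow, map_pow, Units.val_mul, Units.val_mul,
        Units.val_pow_eq_pow_val, Units.val_pow_eq_pow_val, Units.val_pow_eq_pow_val]
    rw [ea, eb, hρaC, hρbC, hBa, hBb, hρaA, hρbA,
      aux_trace_pow n ξ hξ a ha i j k, aux_trace_pow n ξ hξ b hb i j k]
  · rintro hne ⟨η, P, hP⟩
    have h1 := hP C
    rw [hρaC, hρbC] at h1
    have hPP : (P : Matrix (Fin n) (Fin n) ℂ) *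
        ((P⁻¹ : Matrix.GeneralLinearGroup (Fin n) ℂ) : Matrix (Fin n) (Fin n) ℂ) = 1 := by
      rw [← Units.val_mul, mul_inv_cancel, Units.val_one]
    have h2 : ξ ^ a • (1 : Matrix (Fin n) (Fin n) ℂ) =
        ((η C : ℂ) * ξ ^ b) • (1 : Matrix (Fin n) (Fin n) ℂ) := by
      rw [h1, smul_smul, mul_smul_comm, smul_mul_assoc, mul_one, hPP]
    have h3 : ξ ^ a = (η C : ℂ) * ξ ^ b := by
      have := congrFun (congrFun h2 (0 : Fin n)) (0 : Fin n)
      simpa [Matrix.smul_apply, Matrix.one_apply] using this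
    have hCcomm : C = A * B * A⁻¹ * B⁻¹ := by rw [hAB]; group
    have hη1 : (η C : ℂ) = 1 := by
      have : η C = η A * η B * (η A)⁻¹ * (η B)⁻¹ := by
        rw [hCcomm, _root_.map_mul, _root_.map_mul, _root_.map_mul, map_inv, map_inv]
      rw [this, mul_inv_cancel_comm, mul_inv_cancel]
      rfl
    rw [hη1, one_mul] at h3
    have h4 : ξ ^ (a - b) = 1 := by
      rw [zpow_sub₀ hξ0, h3, div_self (zpow_ne_zero _ hξ0)]
    have h5 : (n : ℤ) ∣ a - b := (hξ.zpow_eq_one_iff_dvd _).mp h4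
    exact hne (Int.modEq_iff_dvd.mpr (by rw [← neg_sub]; exact dvd_neg.mpr h5))
end

section
/- Let G be a group, G' a normal subgroup such that G/G' is cyclic and finite, and χ : G' → ℂˣ a homomorphism that is invariant under the conjugation action of G (i.e., χ(gxg⁻¹) = χ(x) for all g ∈ G, x ∈ G'). Assume further that every element of ℂˣ has roots of all orders (true for ℂ). Then χ extends to a homomorphism χ̃ : G → ℂˣ. -/
theorem stmt_17 {G : Type*} [Group G] (G' : Subgroup G) (hn : G'.Normal)
    [Finite (G ⧸ G')] [IsCyclic (G ⧸ G')]
    (χ : ↥G' →* ℂˣ)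
    (hinv : ∀ (g : G) (x : ↥G'),
      χ ⟨g * ↑x * g⁻¹, hn.conj_mem ↑x x.2 g⟩ = χ x) :
    ∃ χext : G →* ℂˣ, ∀ x : ↥G', χext ↑x = χ x := by
  obtain ⟨q, hq⟩ := IsCyclic.exists_generator (α := G ⧸ G')
  obtain ⟨g, hg⟩ := QuotientGroup.mk_surjective q
  set m := orderOf q with hmdef
  have hm : 0 < m := orderOf_pos q
  -- membership lemma
  have hmem : ∀ (x : G) (k : ℤ), (x : G ⧸ G') = q ^ k → g ^ (-k) * x ∈ G' := by
    intro x k hk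
    rw [← QuotientGroup.eq_one_iff]
    have : ((g ^ (-k) * x : G) : G ⧸ G') = (g : G ⧸ G') ^ (-k) * (x : G ⧸ G') := by
      simp
    rw [this, hg, hk, zpow_neg, inv_mul_cancel]
  -- every x has some exponent
  have hexists : ∀ x : G, ∃ k : ℤ, g ^ (-k) * x ∈ G' := by
    intro x
    obtain ⟨k, hk⟩ := hq (x : G ⧸ G')
    exact ⟨k, hmem x k hk.symm⟩
  choose K hK using hexists
  -- g ^ m ∈ G'
  have hgm : (g : G) ^ (m : ℤ) ∈ G' := by
    rw [← QuotientGroup.eq_one_iff]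
    have : ((g ^ (m : ℤ) : G) : G ⧸ G') = (g : G ⧸ G') ^ (m : ℤ) := by simp
    rw [this, hg]
    exact_mod_cast pow_orderOf_eq_one q
  -- m-th root ζ of χ(g^m)
  obtain ⟨z, hz⟩ := IsAlgClosed.exists_pow_nat_eq ((χ ⟨g ^ (m : ℤ), hgm⟩ : ℂˣ) : ℂ) hm
  have hz0 : z ≠ 0 := by
    intro h
    rw [h, zero_pow hm.ne'] at hz
    exact Units.ne_zero _ hz.symm
  set ζ : ℂˣ := Units.mk0 z hz0 with hζdef
  have hζ : ζ ^ (m : ℤ) = χ ⟨g ^ (m : ℤ), hgm⟩ := by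
    ext
    push_cast
    exact hz
  -- the function
  set f : G → ℂˣ := fun x => ζ ^ (K x) * χ ⟨g ^ (-(K x)) * x, hK x⟩ with hfdef
  -- independence of exponent choice
  have key : ∀ (x : G) (k : ℤ) (h : g ^ (-k) * x ∈ G'),
      f x = ζ ^ k * χ ⟨g ^ (-k) * x, h⟩ := by
    intro x k h
    have hdvd : (m : ℤ) ∣ k - K x := by
      rw [hmdef, orderOf_dvd_iff_zpow_eq_one]
      have hmem2 : g ^ (k - K x) ∈ G' := by
        have := mul_mem h (inv_mem (hK x))
        have heq : g ^ (-k) * x * (g ^ (-(K x)) * x)⁻¹ = g ^ (-k) * g ^ (K x) := by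
          group
        rw [heq] at this
        have : g ^ (-k) * g ^ (K x) ∈ G' := this
        have := inv_mem this
        have heq2 : (g ^ (-k) * g ^ (K x))⁻¹ = g ^ (k - K x) := by group
        rwa [heq2] at this
      rw [← QuotientGroup.eq_one_iff] at hmem2
      have : ((g ^ (k - K x) : G) : G ⧸ G') = (g : G ⧸ G') ^ (k - K x) := by simp
      rw [this, hg] at hmem2
      exact hmem2
    obtain ⟨t, ht⟩ := hdvd
    -- k = K x + m * t
    have hk : k = K x + m * t := by linarith [ht]
    subst hk
    -- decompose the subgroup element
    have hgmt : g ^ (-(m * t : ℤ)) ∈ G' := by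
      have : g ^ (-(m * t : ℤ)) = (g ^ (m : ℤ)) ^ (-t) := by
        rw [← zpow_mul]; ring_nf
      rw [this]
      exact zpow_mem hgm _
    have hsplit : (⟨g ^ (-(K x + m * t)) * x, h⟩ : G') =
        ⟨g ^ (-(m * t : ℤ)), hgmt⟩ * ⟨g ^ (-(K x)) * x, hK x⟩ := by
      ext
      push_cast
      rw [← mul_assoc, ← zpow_add]
      ring_nf
    rw [hfdef]
    simp only
    rw [hsplit, map_mul]
    have hχgmt : χ ⟨g ^ (-(m * t : ℤ)), hgmt⟩ = ζ ^ (-(m * t : ℤ)) := by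
      have : (⟨g ^ (-(m * t : ℤ)), hgmt⟩ : G') = (⟨g ^ (m : ℤ), hgm⟩ : G') ^ (-t) := by
        ext
        push_cast
        rw [← zpow_mul]
        ring_nf
      rw [this, map_zpow, ← hζ, ← zpow_mul]
      ring_nf
    rw [hχgmt, zpow_add, mul_assoc, ← mul_assoc (ζ ^ ((m : ℤ) * t)), ← zpow_add]
    simp
  -- multiplicativity
  have hmul : ∀ x y : G, f (x * y) = f x * f y := by
    intro x y
    have ha : g ^ (-(K x)) * x ∈ G' := hK x
    have hb : g ^ (-(K y)) * y ∈ G' := hK y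
    have hconj : g ^ (-(K y)) * (g ^ (-(K x)) * x) * (g ^ (-(K y)))⁻¹ ∈ G' :=
      hn.conj_mem _ ha _
    have hmemxy : g ^ (-(K x + K y)) * (x * y) ∈ G' := by
      have heq : g ^ (-(K x + K y)) * (x * y) =
          (g ^ (-(K y)) * (g ^ (-(K x)) * x) * (g ^ (-(K y)))⁻¹) * (g ^ (-(K y)) * y) := by
        rw [zpow_neg, zpow_add]
        group
      rw [heq]
      exact mul_mem hconj hb
    rw [key (x * y) (K x + K y) hmemxy]
    have hsplit : (⟨g ^ (-(K x + K y)) * (x * y), hmemxy⟩ : G') =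
        ⟨g ^ (-(K y)) * (g ^ (-(K x)) * x) * (g ^ (-(K y)))⁻¹, hconj⟩ *
        ⟨g ^ (-(K y)) * y, hb⟩ := by
      ext
      push_cast
      rw [zpow_neg, zpow_add]
      group
    rw [hsplit, map_mul]
    have := hinv (g ^ (-(K y))) ⟨g ^ (-(K x)) * x, ha⟩
    rw [this]
    rw [hfdef]
    simp only
    rw [zpow_add]
    exact mul_mul_mul_comm _ _ _ _
  refine ⟨MonoidHom.mk' f hmul, ?_⟩
  intro x
  have h0 : g ^ (-(0 : ℤ)) * (x : G) ∈ G' := by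
    simp only [neg_zero, zpow_zero, one_mul]; exact x.2
  have hkey := key (x : G) 0 h0
  show f (x : G) = χ x
  rw [hkey]
  have : (⟨g ^ (-(0 : ℤ)) * (x : G), h0⟩ : G') = x := by
    ext; simp
  rw [this]
  simp
end
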